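/- Let 𝕋 = {z ∈ ℂ : |z| = 1} be the unit circle and C(𝕋) the algebra of continuous complex-valued functions on 𝕋. For a closed subset K ⊆ 𝕋, the vanishing ideal I(K) is an annihilator ideal (i.e. ann(ann(I(K))) = I(K)) if and only if K equals the closure of its interior. -/
import Mathlib


/-- The vanishing ideal `I(K)` of a subset `K` of the circle `𝕋`, as a subset
of `C(𝕋)`. -/
def vanishIdeal (K : Set Circle) : Set C(Circle, ℂ) :=
  {f | ∀ x ∈ K, f x = 0}

/-- The annihilator of a set of functions in `C(𝕋)`. -/
def annC (I : Set C(Circle, ℂ)) : Set C(Circle, ℂ) :=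
  {g | ∀ f ∈ I, g * f = 0}

/-- For a closed set `A` and `x ∉ A`, there is a function vanishing on `A`
but not at `x`. -/
lemma exists_sep (A : Set Circle) (hA : IsClosed A) {x : Circle} (hx : x ∉ A) :
    ∃ f ∈ vanishIdeal A, f x ≠ 0 := by
  rcases A.eq_empty_or_nonempty with rfl | hne
  · exact ⟨1, fun y hy => absurd hy (Set.notMem_empty y), one_ne_zero⟩
  · refine ⟨⟨fun y => (Metric.infDist y A : ℂ),
      Complex.continuous_ofReal.comp (Metric.continuous_infDist_pt A)⟩, ?_, ?_⟩
    · intro y hy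
      simp [Metric.infDist_zero_of_mem hy]
    · have hpos : 0 < Metric.infDist x A := (hA.notMem_iff_infDist_pos hne).mp hx
      simpa using ne_of_gt hpos

lemma vanish_eq_iff (A B : Set Circle) (hA : IsClosed A) (hB : IsClosed B) :
    vanishIdeal A = vanishIdeal B ↔ A = B := by
  constructor
  · intro h
    apply Set.eq_of_subset_of_subset
    · intro x hxA
      by_contra hxB
      obtain ⟨f, hf, hfx⟩ := exists_sep B hB hxB
      rw [← h] at hf
      exact hfx (hf x hxA)
    · intro x hxB
      by_contra hxA
      obtain ⟨f, hf, hfx⟩ := exists_sep A hA hxA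
      rw [h] at hf
      exact hfx (hf x hxB)
  · rintro rfl; rfl

lemma ann_vanish (K : Set Circle) (hK : IsClosed K) :
    annC (vanishIdeal K) = vanishIdeal (closure Kᶜ) := by
  apply Set.eq_of_subset_of_subset
  · intro g hg x hx
    have hsub : Kᶜ ⊆ (⇑g) ⁻¹' {0} := by
      intro y hy
      obtain ⟨f, hf, hfy⟩ := exists_sep K hK hy
      have := hg f hf
      have h0 : g y * f y = 0 := by
        have := congrArg (fun h => h y) (congrArg DFunLike.coe this)
        simpa using this
      exact (mul_eq_zero.mp h0).resolve_right hfy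
    have hcl : IsClosed ((⇑g) ⁻¹' {0}) := isClosed_singleton.preimage g.continuous
    exact closure_minimal hsub hcl hx
  · intro g hg f hf
    ext y
    by_cases hy : y ∈ K
    · simp [hf y hy]
    · simp [hg y (subset_closure hy)]

theorem vanishIdeal_annihilator_iff (K : Set Circle) (hK : IsClosed K) :
    annC (annC (vanishIdeal K)) = vanishIdeal K ↔
      K = closure (interior K) := by
  rw [ann_vanish K hK, ann_vanish _ isClosed_closure]
  have h1 : (closure Kᶜ)ᶜ = interior K := by
    rw [closure_compl, compl_compl]
  rw [h1, vanish_eq_iff _ _ isClosed_closure hK, eq_comm]
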